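/- Let λ₁, …, λ_K be distinct nonzero complex numbers and M₁, …, M_K nonnegative integers, and suppose ∑_k M(λ_k) λ_k^N = c for all positive integers N, where c is a positive real. Then c is a natural number, and moreover c equals the multiplicity M(1) of the value 1 (i.e., 1 appears among the λ_k with coefficient c, and all other coefficients vanish). -/
import Mathlib


open Finset

theorem normalization_constant_is_integer (K : ℕ) (lam : Fin K → ℂ) (M : Fin K → ℕ)
    (hdist : Function.Injective lam) (hnz : ∀ k, lam k ≠ 0)
    (c : ℝ) (hc : 0 < c)
    (hsum : ∀ N : ℕ, 1 ≤ N → ∑ k, (M k : ℂ) * lam k ^ N = (c : ℂ)) :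
    (∃ n : ℕ, c = n) ∧ (∀ k, lam k ≠ 1 → M k = 0) ∧ (∀ k, lam k = 1 → (M k : ℝ) = c) := by
  set b : Fin K → ℂ := fun k => (M k : ℂ) * lam k * (lam k - 1) with hb
  have hb0 : b = 0 := by
    apply Matrix.eq_zero_of_forall_pow_sum_mul_pow_eq_zero hdist
    intro i
    have h1 := hsum ((i : ℕ) + 1) (by omega)
    have h2 := hsum ((i : ℕ) + 2) (by omega)
    calc ∑ j, b j * lam j ^ (i : ℕ)
        = (∑ k, (M k : ℂ) * lam k ^ ((i : ℕ) + 2))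
          - ∑ k, (M k : ℂ) * lam k ^ ((i : ℕ) + 1) := by
          rw [← Finset.sum_sub_distrib]
          refine Finset.sum_congr rfl fun k _ => ?_
          simp only [hb]
          ring
      _ = 0 := by rw [h1, h2, sub_self]
  have hMz : ∀ k, lam k ≠ 1 → M k = 0 := by
    intro k hk
    have : b k = 0 := by rw [hb0]; rfl
    simp only [hb, mul_eq_zero] at this
    rcases this with (h | h) | h
    · exact_mod_cast h
    · exact absurd h (hnz k)
    · exact absurd (by linear_combination h) hk
  have hc1 := hsum 1 le_rfl
  have hsum1 : (c : ℂ) = (∑ k, if lam k = 1 then (M k : ℕ) else 0 : ℕ) := by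
    rw [← hc1]
    push_cast
    refine Finset.sum_congr rfl fun k _ => ?_
    by_cases hk : lam k = 1
    · simp [hk]
    · simp [hk, hMz k hk]
  refine ⟨⟨∑ k, if lam k = 1 then (M k : ℕ) else 0, ?_⟩, hMz, ?_⟩
  · refine Complex.ofReal_inj.mp ?_
    rw [hsum1]; norm_cast
  · intro k hk
    have huniq : ∀ j, j ≠ k → (if lam j = 1 then (M j : ℕ) else 0) = 0 := by
      intro j hj
      have : lam j ≠ 1 := fun h => hj (hdist (h.trans hk.symm))
      simp [this]
    have : (∑ j, if lam j = 1 then (M j : ℕ) else 0 : ℕ) = M k := by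
      rw [Finset.sum_eq_single k (fun j _ hj => huniq j hj) (by simp)]
      simp [hk]
    have hcM : (c : ℂ) = (M k : ℂ) := by rw [hsum1, this]
    refine Complex.ofReal_inj.mp ?_
    rw [hcM]; norm_cast
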